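/- arXiv:2111.04786 — 2 statements merged into one kernel-verified Lean document; each statement's English description precedes it below -/
import Mathlib

section
/- Let T, U be complex numbers with U ≠ 0, |TU| < 1 and |T U^{−1}| < 1. Then all of the following families are absolutely summable and the following identity holds: [∑_{a≥0, b∈ℤ, 2b−a≥0} T^{(4b+1−2a)(2a+1)} U^{4b+1−2a} − ∑_{a<0, b∈ℤ, 2b−a<0} T^{(4b+1−2a)(2a+1)} U^{4b+1−2a}] + [∑_{a≥0, b∈ℤ, 2b−a>0} T^{(4b−1−2a)(2a+1)} U^{4b−1−2a} − ∑_{a<0, b∈ℤ, 2b−a≤0} T^{(4b−1−2a)(2a+1)} U^{4b−1−2a}] = ∑_{a≥0, n≥0} T^{(2n+1)(2a+1)} U^{2n+1} − ∑_{a<0, n<0} T^{(2n+1)(2a+1)} U^{2n+1}. -/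
/-- Summand of the first indefinite double sum (from (3.4)):
`T^{(4b+1−2a)(2a+1)} U^{4b+1−2a}`, with `p = (a, b)`. -/
noncomputable def term₁ (T U : ℂ) (p : ℤ × ℤ) : ℂ :=
  T ^ ((4 * p.2 + 1 - 2 * p.1) * (2 * p.1 + 1)) * U ^ (4 * p.2 + 1 - 2 * p.1)

/-- Summand of the second indefinite double sum (from (3.5)):
`T^{(4b−1−2a)(2a+1)} U^{4b−1−2a}`, with `p = (a, b)`. -/
noncomputable def term₂ (T U : ℂ) (p : ℤ × ℤ) : ℂ :=
  T ^ ((4 * p.2 - 1 - 2 * p.1) * (2 * p.1 + 1)) * U ^ (4 * p.2 - 1 - 2 * p.1)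

/-- Summand of the combined indefinite double sum (from (3.8)):
`T^{(2n+1)(2a+1)} U^{2n+1}`, with `p = (a, n)`. -/
noncomputable def term₃ (T U : ℂ) (p : ℤ × ℤ) : ℂ :=
  T ^ ((2 * p.2 + 1) * (2 * p.1 + 1)) * U ^ (2 * p.2 + 1)

/- quadrant sets split by parity -/
def Pset : Set (ℤ × ℤ) := {p | 0 ≤ p.1 ∧ 0 ≤ p.2}
def PsetE : Set (ℤ × ℤ) := {p | (0 ≤ p.1 ∧ 0 ≤ p.2) ∧ (p.1 + p.2) % 2 = 0}
def PsetO : Set (ℤ × ℤ) := {p | (0 ≤ p.1 ∧ 0 ≤ p.2) ∧ (p.1 + p.2) % 2 = 1}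
def Nset : Set (ℤ × ℤ) := {p | p.1 < 0 ∧ p.2 < 0}
def NsetE : Set (ℤ × ℤ) := {p | (p.1 < 0 ∧ p.2 < 0) ∧ (p.1 + p.2) % 2 = 0}
def NsetO : Set (ℤ × ℤ) := {p | (p.1 < 0 ∧ p.2 < 0) ∧ (p.1 + p.2) % 2 = 1}

noncomputable def eE : {p : ℤ × ℤ // 0 ≤ p.1 ∧ 0 ≤ 2 * p.2 - p.1} ≃ ↥PsetE where
  toFun p := ⟨(p.1.1, 2 * p.1.2 - p.1.1), by
    obtain ⟨⟨a, b⟩, h⟩ := p; simp only [PsetE, Set.mem_setOf_eq]; dsimp only at h ⊢; omega⟩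
  invFun q := ⟨(q.1.1, (q.1.2 + q.1.1) / 2), by
    obtain ⟨⟨a, n⟩, h⟩ := q; simp only [PsetE, Set.mem_setOf_eq] at h; dsimp only at h ⊢; omega⟩
  left_inv := by
    rintro ⟨⟨a, b⟩, h⟩; apply Subtype.ext; dsimp only; simp only [Prod.mk.injEq]
    exact ⟨trivial, by omega⟩
  right_inv := by
    rintro ⟨⟨a, n⟩, h⟩; simp only [PsetE, Set.mem_setOf_eq] at h
    apply Subtype.ext; dsimp only; simp only [Prod.mk.injEq]
    exact ⟨trivial, by omega⟩

noncomputable def eO : {p : ℤ × ℤ // 0 ≤ p.1 ∧ 0 < 2 * p.2 - p.1} ≃ ↥PsetO where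
  toFun p := ⟨(p.1.1, 2 * p.1.2 - p.1.1 - 1), by
    obtain ⟨⟨a, b⟩, h⟩ := p; simp only [PsetO, Set.mem_setOf_eq]; dsimp only at h ⊢; omega⟩
  invFun q := ⟨(q.1.1, (q.1.2 + q.1.1 + 1) / 2), by
    obtain ⟨⟨a, n⟩, h⟩ := q; simp only [PsetO, Set.mem_setOf_eq] at h; dsimp only at h ⊢; omega⟩
  left_inv := by
    rintro ⟨⟨a, b⟩, h⟩; apply Subtype.ext; dsimp only; simp only [Prod.mk.injEq]
    exact ⟨trivial, by omega⟩
  right_inv := by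
    rintro ⟨⟨a, n⟩, h⟩; simp only [PsetO, Set.mem_setOf_eq] at h
    apply Subtype.ext; dsimp only; simp only [Prod.mk.injEq]
    exact ⟨trivial, by omega⟩

noncomputable def eE' : {p : ℤ × ℤ // p.1 < 0 ∧ 2 * p.2 - p.1 < 0} ≃ ↥NsetE where
  toFun p := ⟨(p.1.1, 2 * p.1.2 - p.1.1), by
    obtain ⟨⟨a, b⟩, h⟩ := p; simp only [NsetE, Set.mem_setOf_eq]; dsimp only at h ⊢; omega⟩
  invFun q := ⟨(q.1.1, (q.1.2 + q.1.1) / 2), by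
    obtain ⟨⟨a, n⟩, h⟩ := q; simp only [NsetE, Set.mem_setOf_eq] at h; dsimp only at h ⊢; omega⟩
  left_inv := by
    rintro ⟨⟨a, b⟩, h⟩; apply Subtype.ext; dsimp only; simp only [Prod.mk.injEq]
    exact ⟨trivial, by omega⟩
  right_inv := by
    rintro ⟨⟨a, n⟩, h⟩; simp only [NsetE, Set.mem_setOf_eq] at h
    apply Subtype.ext; dsimp only; simp only [Prod.mk.injEq]
    exact ⟨trivial, by omega⟩

noncomputable def eO' : {p : ℤ × ℤ // p.1 < 0 ∧ 2 * p.2 - p.1 ≤ 0} ≃ ↥NsetO where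
  toFun p := ⟨(p.1.1, 2 * p.1.2 - p.1.1 - 1), by
    obtain ⟨⟨a, b⟩, h⟩ := p; simp only [NsetO, Set.mem_setOf_eq]; dsimp only at h ⊢; omega⟩
  invFun q := ⟨(q.1.1, (q.1.2 + q.1.1 + 1) / 2), by
    obtain ⟨⟨a, n⟩, h⟩ := q; simp only [NsetO, Set.mem_setOf_eq] at h; dsimp only at h ⊢; omega⟩
  left_inv := by
    rintro ⟨⟨a, b⟩, h⟩; apply Subtype.ext; dsimp only; simp only [Prod.mk.injEq]
    exact ⟨trivial, by omega⟩
  right_inv := by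
    rintro ⟨⟨a, n⟩, h⟩; simp only [NsetO, Set.mem_setOf_eq] at h
    apply Subtype.ext; dsimp only; simp only [Prod.mk.injEq]
    exact ⟨trivial, by omega⟩

noncomputable def eNeg : {p : ℤ × ℤ // 0 ≤ p.1 ∧ 0 ≤ p.2} ≃ {p : ℤ × ℤ // p.1 < 0 ∧ p.2 < 0} where
  toFun p := ⟨(-p.1.1 - 1, -p.1.2 - 1), by
    obtain ⟨⟨a, n⟩, h⟩ := p; dsimp only at h ⊢; omega⟩
  invFun p := ⟨(-p.1.1 - 1, -p.1.2 - 1), by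
    obtain ⟨⟨a, n⟩, h⟩ := p; dsimp only at h ⊢; omega⟩
  left_inv := by
    rintro ⟨⟨a, n⟩, h⟩; apply Subtype.ext; dsimp only; simp only [Prod.mk.injEq]
    exact ⟨by omega, by omega⟩
  right_inv := by
    rintro ⟨⟨a, n⟩, h⟩; apply Subtype.ext; dsimp only; simp only [Prod.mk.injEq]
    exact ⟨by omega, by omega⟩

lemma t1eq (T U : ℂ) (p : ℤ × ℤ) : term₁ T U p = term₃ T U (p.1, 2 * p.2 - p.1) := by
  unfold term₁ term₃
  have e1 : (4 * p.2 + 1 - 2 * p.1) = 2 * (p.1, 2 * p.2 - p.1).2 + 1 := by simp; ring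
  rw [e1]

lemma t2eq (T U : ℂ) (p : ℤ × ℤ) : term₂ T U p = term₃ T U (p.1, 2 * p.2 - p.1 - 1) := by
  unfold term₂ term₃
  have e1 : (4 * p.2 - 1 - 2 * p.1) = 2 * (p.1, 2 * p.2 - p.1 - 1).2 + 1 := by simp; ring
  rw [e1]

lemma t3eq (T U : ℂ) (hU : U ≠ 0) (p : ℤ × ℤ) :
    term₃ T U (-p.1 - 1, -p.2 - 1) =
      T ^ ((2 * p.2 + 1) * (2 * p.1 + 1)) * (U⁻¹) ^ (2 * p.2 + 1) := by
  unfold term₃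
  have e1 : (2 * (-p.1 - 1, -p.2 - 1).2 + 1) * (2 * (-p.1 - 1, -p.2 - 1).1 + 1)
      = (2 * p.2 + 1) * (2 * p.1 + 1) := by simp; ring
  have e2 : (2 * (-p.1 - 1, -p.2 - 1).2 + 1) = -(2 * p.2 + 1) := by simp; ring
  rw [e1, e2, zpow_neg, ← inv_zpow]

/-- Key summability on the first quadrant. -/
lemma keySummable (T V : ℂ) (hT : ‖T‖ < 1) (hTV : ‖T‖ * ‖V‖ < 1) :
    Summable (fun p : {p : ℤ × ℤ // 0 ≤ p.1 ∧ 0 ≤ p.2} =>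
      T ^ ((2 * p.1.2 + 1) * (2 * p.1.1 + 1)) * V ^ (2 * p.1.2 + 1)) := by
  have hT0 : (0:ℝ) ≤ ‖T‖ := norm_nonneg T
  have hV0 : (0:ℝ) ≤ ‖V‖ := norm_nonneg V
  have hr0 : (0:ℝ) ≤ ‖T‖ * ‖V‖ := by positivity
  -- majorant on ℕ × ℕ
  have hg1 : Summable (fun i : ℕ => (‖T‖ * ‖V‖) ^ (2 * i + 1)) := by
    have h := summable_geometric_of_lt_one (by positivity : (0:ℝ) ≤ (‖T‖*‖V‖)^2)
      (by nlinarith : (‖T‖*‖V‖)^2 < 1)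
    refine (h.mul_left (‖T‖ * ‖V‖)).congr fun i => ?_
    rw [← pow_mul]
    exact (pow_succ' (‖T‖ * ‖V‖) (2 * i)).symm
  have hg2 : Summable (fun i : ℕ => ‖T‖ ^ (2 * i)) := by
    have h := summable_geometric_of_lt_one (by positivity : (0:ℝ) ≤ ‖T‖^2)
      (by nlinarith : ‖T‖^2 < 1)
    exact h.congr fun i => by rw [← pow_mul]
  have hn1 : 0 ≤ (fun i : ℕ => (‖T‖ * ‖V‖) ^ (2 * i + 1)) := fun i => by positivity
  have hn2 : 0 ≤ (fun i : ℕ => ‖T‖ ^ (2 * i)) := fun i => by positivity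
  have hF := Summable.mul_of_nonneg (f := fun i : ℕ => (‖T‖ * ‖V‖) ^ (2 * i + 1))
    (g := fun i : ℕ => ‖T‖ ^ (2 * i)) hg1 hg2 hn1 hn2
  -- compose with the injection
  have hj : Function.Injective
      (fun p : {p : ℤ × ℤ // 0 ≤ p.1 ∧ 0 ≤ p.2} => ((p.1.2.toNat, p.1.1.toNat) : ℕ × ℕ)) := by
    rintro ⟨⟨a, n⟩, ha, hn⟩ ⟨⟨a', n'⟩, ha', hn'⟩ h
    simp only [Prod.mk.injEq, Subtype.mk.injEq] at *
    omega
  have hmaj := hF.comp_injective hj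
  apply Summable.of_norm
  apply Summable.of_nonneg_of_le (fun p => norm_nonneg _) _ hmaj
  rintro ⟨⟨a, n⟩, ha, hn⟩
  simp only [Function.comp_apply]
  lift a to ℕ using ha
  lift n to ℕ using hn
  simp only [Int.toNat_natCast]
  have e1 : (2 * (n:ℤ) + 1) * (2 * (a:ℤ) + 1) = (((2 * n + 1) * (2 * a + 1) : ℕ) : ℤ) := by
    push_cast; ring
  have e2 : (2 * (n:ℤ) + 1) = ((2 * n + 1 : ℕ) : ℤ) := by push_cast; ring
  rw [norm_mul, e1, e2, zpow_natCast, zpow_natCast, norm_pow, norm_pow]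
  have e3 : ‖T‖ ^ ((2 * n + 1) * (2 * a + 1))
      = ‖T‖ ^ (2 * n + 1) * ‖T‖ ^ (2 * a) * ‖T‖ ^ (4 * (a * n)) := by
    rw [← pow_add, ← pow_add]; congr 1; ring
  rw [e3, mul_pow]
  have h01 : ‖T‖ ^ (4 * (a * n)) ≤ 1 := pow_le_one₀ hT0 hT.le
  calc ‖T‖ ^ (2 * n + 1) * ‖T‖ ^ (2 * a) * ‖T‖ ^ (4 * (a * n)) * ‖V‖ ^ (2 * n + 1)
      ≤ ‖T‖ ^ (2 * n + 1) * ‖T‖ ^ (2 * a) * 1 * ‖V‖ ^ (2 * n + 1) := by gcongr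
    _ = ‖T‖ ^ (2 * n + 1) * ‖V‖ ^ (2 * n + 1) * ‖T‖ ^ (2 * a) := by ring

theorem reindexing_identity (T U : ℂ) (hU : U ≠ 0)
    (h1 : ‖T * U‖ < 1) (h2 : ‖T * U⁻¹‖ < 1) :
    Summable (fun p : {p : ℤ × ℤ // 0 ≤ p.1 ∧ 0 ≤ 2 * p.2 - p.1} => term₁ T U p.1) ∧
    Summable (fun p : {p : ℤ × ℤ // p.1 < 0 ∧ 2 * p.2 - p.1 < 0} => term₁ T U p.1) ∧
    Summable (fun p : {p : ℤ × ℤ // 0 ≤ p.1 ∧ 0 < 2 * p.2 - p.1} => term₂ T U p.1) ∧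
    Summable (fun p : {p : ℤ × ℤ // p.1 < 0 ∧ 2 * p.2 - p.1 ≤ 0} => term₂ T U p.1) ∧
    Summable (fun p : {p : ℤ × ℤ // 0 ≤ p.1 ∧ 0 ≤ p.2} => term₃ T U p.1) ∧
    Summable (fun p : {p : ℤ × ℤ // p.1 < 0 ∧ p.2 < 0} => term₃ T U p.1) ∧
    ((∑' p : {p : ℤ × ℤ // 0 ≤ p.1 ∧ 0 ≤ 2 * p.2 - p.1}, term₁ T U p.1)
        - (∑' p : {p : ℤ × ℤ // p.1 < 0 ∧ 2 * p.2 - p.1 < 0}, term₁ T U p.1))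
      + ((∑' p : {p : ℤ × ℤ // 0 ≤ p.1 ∧ 0 < 2 * p.2 - p.1}, term₂ T U p.1)
        - (∑' p : {p : ℤ × ℤ // p.1 < 0 ∧ 2 * p.2 - p.1 ≤ 0}, term₂ T U p.1))
      = (∑' p : {p : ℤ × ℤ // 0 ≤ p.1 ∧ 0 ≤ p.2}, term₃ T U p.1)
        - (∑' p : {p : ℤ × ℤ // p.1 < 0 ∧ p.2 < 0}, term₃ T U p.1) := by
  have hU0 : ‖U‖ ≠ 0 := norm_ne_zero_iff.mpr hU
  have hTsq : ‖T‖ ^ 2 = ‖T * U‖ * ‖T * U⁻¹‖ := by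
    rw [norm_mul, norm_mul, norm_inv,
      show ‖T‖ * ‖U‖ * (‖T‖ * ‖U‖⁻¹) = ‖T‖ ^ 2 * (‖U‖ * ‖U‖⁻¹) by ring,
      mul_inv_cancel₀ hU0, mul_one]
  have hT : ‖T‖ < 1 := by nlinarith [norm_nonneg T, norm_nonneg (T*U), norm_nonneg (T*U⁻¹)]
  have hTU : ‖T‖ * ‖U‖ < 1 := by rwa [← norm_mul]
  have hTUi : ‖T‖ * ‖U⁻¹‖ < 1 := by rwa [← norm_mul]
  -- summability on the two quadrants
  have hP : Summable (fun p : {p : ℤ × ℤ // 0 ≤ p.1 ∧ 0 ≤ p.2} => term₃ T U p.1) := by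
    exact (keySummable T U hT hTU).congr fun p => rfl
  have hN : Summable (fun p : {p : ℤ × ℤ // p.1 < 0 ∧ p.2 < 0} => term₃ T U p.1) := by
    have hk := keySummable T U⁻¹ hT hTUi
    refine (Equiv.summable_iff eNeg).mp ?_
    refine (hk.congr ?_)
    rintro ⟨⟨a, n⟩, h⟩
    exact (t3eq T U hU (a, n)).symm
  -- summability on parity parts, and on the index sets of the statement
  have hsubPE : PsetE ⊆ Pset := fun p h => h.1
  have hsubPO : PsetO ⊆ Pset := fun p h => h.1
  have hsubNE : NsetE ⊆ Nset := fun p h => h.1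
  have hsubNO : NsetO ⊆ Nset := fun p h => h.1
  have hPE' := hP.comp_injective (Set.inclusion_injective hsubPE)
  have hPE : Summable (fun p : ↥PsetE => term₃ T U p.1) := hPE'.congr fun p => rfl
  have hPO' := hP.comp_injective (Set.inclusion_injective hsubPO)
  have hPO : Summable (fun p : ↥PsetO => term₃ T U p.1) := hPO'.congr fun p => rfl
  have hNE' := hN.comp_injective (Set.inclusion_injective hsubNE)
  have hNE : Summable (fun p : ↥NsetE => term₃ T U p.1) := hNE'.congr fun p => rfl
  have hNO' := hN.comp_injective (Set.inclusion_injective hsubNO)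
  have hNO : Summable (fun p : ↥NsetO => term₃ T U p.1) := hNO'.congr fun p => rfl
  -- transport along the equivalences
  have c1 : ∀ p : {p : ℤ × ℤ // 0 ≤ p.1 ∧ 0 ≤ 2 * p.2 - p.1},
      term₃ T U ((eE p).1) = term₁ T U p.1 := fun p => (t1eq T U p.1).symm
  have c2 : ∀ p : {p : ℤ × ℤ // 0 ≤ p.1 ∧ 0 < 2 * p.2 - p.1},
      term₃ T U ((eO p).1) = term₂ T U p.1 := fun p => (t2eq T U p.1).symm
  have c3 : ∀ p : {p : ℤ × ℤ // p.1 < 0 ∧ 2 * p.2 - p.1 < 0},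
      term₃ T U ((eE' p).1) = term₁ T U p.1 := fun p => (t1eq T U p.1).symm
  have c4 : ∀ p : {p : ℤ × ℤ // p.1 < 0 ∧ 2 * p.2 - p.1 ≤ 0},
      term₃ T U ((eO' p).1) = term₂ T U p.1 := fun p => (t2eq T U p.1).symm
  have s1 : Summable (fun p : {p : ℤ × ℤ // 0 ≤ p.1 ∧ 0 ≤ 2 * p.2 - p.1} => term₁ T U p.1) :=
    ((hPE.comp_injective eE.injective).congr c1)
  have s2 : Summable (fun p : {p : ℤ × ℤ // p.1 < 0 ∧ 2 * p.2 - p.1 < 0} => term₁ T U p.1) :=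
    ((hNE.comp_injective eE'.injective).congr c3)
  have s3 : Summable (fun p : {p : ℤ × ℤ // 0 ≤ p.1 ∧ 0 < 2 * p.2 - p.1} => term₂ T U p.1) :=
    ((hPO.comp_injective eO.injective).congr c2)
  have s4 : Summable (fun p : {p : ℤ × ℤ // p.1 < 0 ∧ 2 * p.2 - p.1 ≤ 0} => term₂ T U p.1) :=
    ((hNO.comp_injective eO'.injective).congr c4)
  refine ⟨s1, s2, s3, s4, hP, hN, ?_⟩
  -- tsum reindexings
  have e1 : (∑' p : {p : ℤ × ℤ // 0 ≤ p.1 ∧ 0 ≤ 2 * p.2 - p.1}, term₁ T U p.1)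
      = ∑' p : ↥PsetE, term₃ T U p.1 := by
    rw [← Equiv.tsum_eq eE (fun q : ↥PsetE => term₃ T U q.1)]
    exact tsum_congr c1 |>.symm
  have e2 : (∑' p : {p : ℤ × ℤ // 0 ≤ p.1 ∧ 0 < 2 * p.2 - p.1}, term₂ T U p.1)
      = ∑' p : ↥PsetO, term₃ T U p.1 := by
    rw [← Equiv.tsum_eq eO (fun q : ↥PsetO => term₃ T U q.1)]
    exact tsum_congr c2 |>.symm
  have e3 : (∑' p : {p : ℤ × ℤ // p.1 < 0 ∧ 2 * p.2 - p.1 < 0}, term₁ T U p.1)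
      = ∑' p : ↥NsetE, term₃ T U p.1 := by
    rw [← Equiv.tsum_eq eE' (fun q : ↥NsetE => term₃ T U q.1)]
    exact tsum_congr c3 |>.symm
  have e4 : (∑' p : {p : ℤ × ℤ // p.1 < 0 ∧ 2 * p.2 - p.1 ≤ 0}, term₂ T U p.1)
      = ∑' p : ↥NsetO, term₃ T U p.1 := by
    rw [← Equiv.tsum_eq eO' (fun q : ↥NsetO => term₃ T U q.1)]
    exact tsum_congr c4 |>.symm
  -- splitting the quadrant sums
  have hunP : PsetE ∪ PsetO = Pset := by
    ext ⟨a, n⟩; simp only [PsetE, PsetO, Pset, Set.mem_union, Set.mem_setOf_eq]; omega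
  have hunN : NsetE ∪ NsetO = Nset := by
    ext ⟨a, n⟩; simp only [NsetE, NsetO, Nset, Set.mem_union, Set.mem_setOf_eq]; omega
  have hdP : Disjoint PsetE PsetO := by
    rw [Set.disjoint_left]; rintro ⟨a, n⟩ h h'
    simp only [PsetE, PsetO, Set.mem_setOf_eq] at h h'; omega
  have hdN : Disjoint NsetE NsetO := by
    rw [Set.disjoint_left]; rintro ⟨a, n⟩ h h'
    simp only [NsetE, NsetO, Set.mem_setOf_eq] at h h'; omega
  have splitP : (∑' p : {p : ℤ × ℤ // 0 ≤ p.1 ∧ 0 ≤ p.2}, term₃ T U p.1)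
      = (∑' p : ↥PsetE, term₃ T U p.1) + ∑' p : ↥PsetO, term₃ T U p.1 := by
    have := Summable.tsum_union_disjoint (f := term₃ T U) hdP hPE hPO
    rw [hunP] at this
    exact this
  have splitN : (∑' p : {p : ℤ × ℤ // p.1 < 0 ∧ p.2 < 0}, term₃ T U p.1)
      = (∑' p : ↥NsetE, term₃ T U p.1) + ∑' p : ↥NsetO, term₃ T U p.1 := by
    have := Summable.tsum_union_disjoint (f := term₃ T U) hdN hNE hNO
    rw [hunN] at this
    exact this
  rw [e1, e2, e3, e4, splitP, splitN]
  ring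
end

section
/- For nonzero complex numbers x, y define the rational function Z_{x,y}(u) := (1−xu)(1−yu)(1−x²yu)(1−xy²u) / ((1−u)(1−xyu)²(1−x²y²u)). Let x, y, w be complex numbers with x ≠ 0, y ≠ 0, 0 < |w| < 1, and assume that (1 − w^{2n−1}·xy) ≠ 0, (1 − w^{2n−1}·(xy)^{−1}) ≠ 0 for all n ≥ 1 and that (1 − (xy)^{−1} w^{2a}) ≠ 0, (1 − xy·w^{2a}) ≠ 0 for all a ≥ 1. Then all infinite products below converge and ∏_{n≥1} [(1−w^{2n})^4/(1−w^n)²] · [(1−w^{2n}·xy)(1−w^{2n}·(xy)^{−1})] / [(1−w^{2n−1}·xy)(1−w^{2n−1}·(xy)^{−1})] · ∏_{a≥1} Z_{x,y}((xy)^{−1} w^{2a})² = ∏_{n≥1} (1−x^{−1}w^{2n})²(1−y^{−1}w^{2n})²(1−x·w^{2n})²(1−y·w^{2n})² / [(1−(xy)^{−1}w^n)(1−w^n)²(1−xy·w^n)]. -/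
open Filter

lemma hasProd_zero_of_factor_zero {f : ℕ → ℂ} {i : ℕ} (h : f i = 0) : HasProd f 0 := by
  have hev : ∀ᶠ s : Finset ℕ in atTop, ∏ j ∈ s, f j = 0 := by
    filter_upwards [Filter.eventually_ge_atTop ({i} : Finset ℕ)] with s hs
    exact Finset.prod_eq_zero (hs (Finset.mem_singleton_self i)) h
  exact (tendsto_const_nhds : Tendsto (fun _ : Finset ℕ => (0:ℂ)) atTop (nhds 0)).congr'
    (hev.mono fun s hs => hs.symm)

lemma mult_one_add {f : ℕ → ℂ} (hf : Summable f) : Multipliable fun n => 1 + f n := by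
  by_cases h : ∃ n, 1 + f n = 0
  · obtain ⟨n, hn⟩ := h
    exact ⟨0, hasProd_zero_of_factor_zero hn⟩
  · push_neg at h
    refine Complex.multipliable_of_summable_log (f := fun n => 1 + f n) ?_
    have hsmall : ∀ᶠ n in atTop, ‖f n‖ < 1/2 :=
      (hf.tendsto_atTop_zero.norm.congr (fun n => rfl)).eventually_lt_const (by norm_num)
    refine Summable.of_norm_bounded_eventually (g := fun n => (3/2) * ‖f n‖)
      (hf.norm.mul_left _) ?_
    rw [Nat.cofinite_eq_atTop]
    filter_upwards [hsmall] with n hn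
    exact Complex.norm_log_one_add_half_le_self hn.le

lemma summable_cw {w : ℂ} (hw1 : ‖w‖ < 1) (c : ℂ) (e : ℕ → ℕ) (he : ∀ n, n ≤ e n) :
    Summable fun n => c * w ^ e n := by
  refine Summable.of_norm_bounded (g := fun n => ‖c‖ * ‖w‖ ^ n)
    ((summable_geometric_of_lt_one (norm_nonneg w) hw1).mul_left _) (fun n => ?_)
  rw [norm_mul, norm_pow]
  exact mul_le_mul_of_nonneg_left (pow_le_pow_of_le_one (norm_nonneg w) hw1.le (he n))
    (norm_nonneg c)

lemma mult_base {w : ℂ} (hw1 : ‖w‖ < 1) (c : ℂ) (e : ℕ → ℕ) (he : ∀ n, n ≤ e n) :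
    Multipliable fun n => 1 - c * w ^ e n := by
  have := mult_one_add (f := fun n => -(c * w ^ e n)) (summable_cw hw1 c e he).neg
  exact (multipliable_congr fun n => by ring).mp this

lemma mult_inv {w : ℂ} (hw1 : ‖w‖ < 1) (c : ℂ) (e : ℕ → ℕ) (he : ∀ n, n ≤ e n)
    (h0 : ∀ n, 1 - c * w ^ e n ≠ 0) :
    Multipliable fun n => (1 - c * w ^ e n)⁻¹ := by
  have hz : Summable fun n => c * w ^ e n := summable_cw hw1 c e he
  have hsmall : ∀ᶠ n in atTop, ‖c * w ^ e n‖ < 1/2 :=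
    (hz.tendsto_atTop_zero.norm.congr (fun n => rfl)).eventually_lt_const (by norm_num)
  have hs : Summable fun n => (c * w ^ e n) * (1 - c * w ^ e n)⁻¹ := by
    refine Summable.of_norm_bounded_eventually (g := fun n => 2 * ‖c * w ^ e n‖)
      (hz.norm.mul_left _) ?_
    rw [Nat.cofinite_eq_atTop]
    filter_upwards [hsmall] with n hn
    have h1 : (1:ℝ)/2 ≤ ‖1 - c * w ^ e n‖ := by
      have := norm_sub_norm_le (1 : ℂ) (c * w ^ e n)
      simp only [norm_one] at this
      linarith
    rw [norm_mul, norm_inv]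
    have hpos : (0:ℝ) < ‖1 - c * w ^ e n‖ := lt_of_lt_of_le (by norm_num) h1
    rw [mul_comm (2:ℝ)]
    have hinv : ‖1 - c * w ^ e n‖⁻¹ ≤ 2 := by
      rw [inv_le_comm₀ hpos (by norm_num)]
      linarith
    exact mul_le_mul_of_nonneg_left hinv (norm_nonneg _)
  have := mult_one_add hs
  refine (multipliable_congr fun n => ?_).mp this
  field_simp
  rw [one_add_div (h0 n), sub_add_cancel]

lemma le_aux1 (n : ℕ) : n ≤ n + 1 := by omega
lemma le_aux2 (n : ℕ) : n ≤ 2*(n+1) := by omega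
lemma le_aux3 (n : ℕ) : n ≤ 2*n+1 := by omega
lemma le_aux4 (n : ℕ) : n ≤ 2*n+1+1 := by omega

lemma frac_abstract (P Q S T U V A B C D : ℂ) (hP : P ≠ 0) (hQ : Q ≠ 0) (hS : S ≠ 0)
    (hT : T ≠ 0) (hU : U ≠ 0) (hV : V ≠ 0) :
    Q ^ 4 / P ^ 2 * (U * V) / (S * T) * ((B * A * C * D) ^ 2 / (V * Q ^ 2 * U) ^ 2) =
    A ^ 2 * B ^ 2 * C ^ 2 * D ^ 2 * (P⁻¹) ^ 2 * ((S * T)⁻¹ * (U * V)⁻¹) := by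
  calc Q ^ 4 / P ^ 2 * (U * V) / (S * T) * ((B * A * C * D) ^ 2 / (V * Q ^ 2 * U) ^ 2)
      = (Q^4*(U*V)*(B*A*C*D)^2) / ((P^2*(S*T))*(V*Q^2*U)^2) := by
        simp only [div_eq_mul_inv, mul_inv, ← inv_pow]; ring
    _ = (A^2*B^2*C^2*D^2) / (P^2*((S*T)*(U*V))) := by
        rw [div_eq_div_iff
          (mul_ne_zero (mul_ne_zero (pow_ne_zero _ hP) (mul_ne_zero hS hT))
            (pow_ne_zero _ (mul_ne_zero (mul_ne_zero hV (pow_ne_zero _ hQ)) hU)))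
          (mul_ne_zero (pow_ne_zero _ hP)
            (mul_ne_zero (mul_ne_zero hS hT) (mul_ne_zero hU hV)))]
        ring
    _ = A ^ 2 * B ^ 2 * C ^ 2 * D ^ 2 * (P⁻¹) ^ 2 * ((S * T)⁻¹ * (U * V)⁻¹) := by
        simp only [div_eq_mul_inv, mul_inv, ← inv_pow]; ring

/-- Göttsche's local factor `Z_{x,y}(u)` for the Hodge polynomials of Hilbert schemes of
points on a surface with `e(X) = (1+xy)(1−x)(1−y)`. -/
noncomputable def Zxy (x y u : ℂ) : ℂ :=
  ((1 - x * u) * (1 - y * u) * (1 - x ^ 2 * y * u) * (1 - x * y ^ 2 * u)) /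
    ((1 - u) * (1 - x * y * u) ^ 2 * (1 - x ^ 2 * y ^ 2 * u))

set_option maxHeartbeats 1600000 in
theorem infinite_product_manipulation (x y w : ℂ) (hx : x ≠ 0) (hy : y ≠ 0)
    (hw0 : 0 < ‖w‖) (hw1 : ‖w‖ < 1)
    (h1 : ∀ n : ℕ, 1 - w ^ (2 * n + 1) * (x * y) ≠ 0)
    (h2 : ∀ n : ℕ, 1 - w ^ (2 * n + 1) * (x * y)⁻¹ ≠ 0)
    (h3 : ∀ a : ℕ, 1 - (x * y)⁻¹ * w ^ (2 * (a + 1)) ≠ 0)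
    (h4 : ∀ a : ℕ, 1 - x * y * w ^ (2 * (a + 1)) ≠ 0) :
    Multipliable (fun n : ℕ =>
      ((1 - w ^ (2 * (n + 1))) ^ 4 / (1 - w ^ (n + 1)) ^ 2) *
        ((1 - w ^ (2 * (n + 1)) * (x * y)) * (1 - w ^ (2 * (n + 1)) * (x * y)⁻¹)) /
        ((1 - w ^ (2 * n + 1) * (x * y)) * (1 - w ^ (2 * n + 1) * (x * y)⁻¹))) ∧
    Multipliable (fun a : ℕ => (Zxy x y ((x * y)⁻¹ * w ^ (2 * (a + 1)))) ^ 2) ∧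
    Multipliable (fun n : ℕ =>
      ((1 - x⁻¹ * w ^ (2 * (n + 1))) ^ 2 * (1 - y⁻¹ * w ^ (2 * (n + 1))) ^ 2 *
          (1 - x * w ^ (2 * (n + 1))) ^ 2 * (1 - y * w ^ (2 * (n + 1))) ^ 2) /
        ((1 - (x * y)⁻¹ * w ^ (n + 1)) * (1 - w ^ (n + 1)) ^ 2 *
          (1 - x * y * w ^ (n + 1)))) ∧
    (∏' n : ℕ,
        ((1 - w ^ (2 * (n + 1))) ^ 4 / (1 - w ^ (n + 1)) ^ 2) *
          ((1 - w ^ (2 * (n + 1)) * (x * y)) * (1 - w ^ (2 * (n + 1)) * (x * y)⁻¹)) /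
          ((1 - w ^ (2 * n + 1) * (x * y)) * (1 - w ^ (2 * n + 1) * (x * y)⁻¹))) *
      (∏' a : ℕ, (Zxy x y ((x * y)⁻¹ * w ^ (2 * (a + 1)))) ^ 2)
      = ∏' n : ℕ,
          ((1 - x⁻¹ * w ^ (2 * (n + 1))) ^ 2 * (1 - y⁻¹ * w ^ (2 * (n + 1))) ^ 2 *
              (1 - x * w ^ (2 * (n + 1))) ^ 2 * (1 - y * w ^ (2 * (n + 1))) ^ 2) /
            ((1 - (x * y)⁻¹ * w ^ (n + 1)) * (1 - w ^ (n + 1)) ^ 2 *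
              (1 - x * y * w ^ (n + 1))) := by
  -- basic nonvanishing facts
  have hwne : ∀ n : ℕ, (1:ℂ) - w ^ (n+1) ≠ 0 := by
    intro n h
    have h' : w ^ (n+1) = 1 := (sub_eq_zero.mp h).symm
    have hlt : ‖w ^ (n+1)‖ < 1 := by
      rw [norm_pow]; exact pow_lt_one₀ (norm_nonneg w) hw1 (Nat.succ_ne_zero n)
    rw [h'] at hlt; simp at hlt
  have hwne2 : ∀ n : ℕ, (1:ℂ) - w ^ (2*(n+1)) ≠ 0 := fun n => by
    have := hwne (2*n+1); rwa [show 2*n+1+1 = 2*(n+1) from by ring] at this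
  have hd1 : ∀ n : ℕ, (1:ℂ) - x*y*w^(2*n+1) ≠ 0 := fun n hc => h1 n (by linear_combination hc)
  have hd2 : ∀ n : ℕ, (1:ℂ) - (x*y)⁻¹*w^(2*n+1) ≠ 0 := fun n hc => h2 n (by linear_combination hc)
  have hq1 : ∀ m : ℕ, (1:ℂ) - x*y*w^(m+1) ≠ 0 := by
    intro m
    rcases Nat.even_or_odd m with ⟨k, hk⟩ | ⟨k, hk⟩
    · subst hk
      intro hc; exact h1 k (by rw [show 2*k+1 = k+k+1 from by ring]; linear_combination hc)
    · subst hk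
      intro hc; exact h4 k (by rw [show 2*(k+1) = 2*k+1+1 from by ring]; linear_combination hc)
  have hq2 : ∀ m : ℕ, (1:ℂ) - (x*y)⁻¹*w^(m+1) ≠ 0 := by
    intro m
    rcases Nat.even_or_odd m with ⟨k, hk⟩ | ⟨k, hk⟩
    · subst hk
      intro hc; exact h2 k (by rw [show 2*k+1 = k+k+1 from by ring]; linear_combination hc)
    · subst hk
      intro hc; exact h3 k (by rw [show 2*(k+1) = 2*k+1+1 from by ring]; linear_combination hc)
  have hxy : x * y ≠ 0 := mul_ne_zero hx hy
  -- multipliable building blocks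
  have mke : ∀ c : ℂ, Multipliable fun n : ℕ => 1 - c * w ^ (2*(n+1)) :=
    fun c => mult_base hw1 c _ le_aux2
  have mk1 : ∀ c : ℂ, Multipliable fun n : ℕ => 1 - c * w ^ (n+1) :=
    fun c => mult_base hw1 c _ le_aux1
  have mwinv : Multipliable fun n : ℕ => ((1:ℂ) - w ^ (n+1))⁻¹ := by
    have := mult_inv hw1 1 (fun n : ℕ => n+1) le_aux1
      (fun n => by rw [one_mul]; exact hwne n)
    exact (multipliable_congr fun n => by rw [one_mul]).mp this
  have mwinv2 : Multipliable fun n : ℕ => ((1:ℂ) - w ^ (2*(n+1)))⁻¹ := by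
    have := mult_inv hw1 1 (fun n : ℕ => 2*(n+1)) le_aux2
      (fun n => by rw [one_mul]; exact hwne2 n)
    exact (multipliable_congr fun n => by rw [one_mul]).mp this
  have minv_o1 : Multipliable fun n : ℕ => ((1:ℂ) - x*y*w^(2*n+1))⁻¹ :=
    mult_inv hw1 (x*y) _ le_aux3 hd1
  have minv_o2 : Multipliable fun n : ℕ => ((1:ℂ) - (x*y)⁻¹*w^(2*n+1))⁻¹ :=
    mult_inv hw1 ((x*y)⁻¹) _ le_aux3 hd2
  have minv_e1 : Multipliable fun n : ℕ => ((1:ℂ) - x*y*w^(2*(n+1)))⁻¹ :=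
    mult_inv hw1 (x*y) _ le_aux2 h4
  have minv_e2 : Multipliable fun n : ℕ => ((1:ℂ) - (x*y)⁻¹*w^(2*(n+1)))⁻¹ :=
    mult_inv hw1 ((x*y)⁻¹) _ le_aux2 h3
  have minv_a1 : Multipliable fun m : ℕ => ((1:ℂ) - x*y*w^(m+1))⁻¹ :=
    mult_inv hw1 (x*y) _ le_aux1 hq1
  have minv_a2 : Multipliable fun m : ℕ => ((1:ℂ) - (x*y)⁻¹*w^(m+1))⁻¹ :=
    mult_inv hw1 ((x*y)⁻¹) _ le_aux1 hq2
  have minv_oo1 : Multipliable fun n : ℕ => ((1:ℂ) - x*y*w^(2*n+1+1))⁻¹ :=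
    mult_inv hw1 (x*y) (fun n => 2*n+1+1) le_aux4 (fun n => hq1 (2*n+1))
  have minv_oo2 : Multipliable fun n : ℕ => ((1:ℂ) - (x*y)⁻¹*w^(2*n+1+1))⁻¹ :=
    mult_inv hw1 ((x*y)⁻¹) (fun n => 2*n+1+1) le_aux4 (fun n => hq2 (2*n+1))
  -- the three multipliability claims
  have hA : Multipliable (fun n : ℕ =>
      ((1 - w ^ (2 * (n + 1))) ^ 4 / (1 - w ^ (n + 1)) ^ 2) *
        ((1 - w ^ (2 * (n + 1)) * (x * y)) * (1 - w ^ (2 * (n + 1)) * (x * y)⁻¹)) /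
        ((1 - w ^ (2 * n + 1) * (x * y)) * (1 - w ^ (2 * n + 1) * (x * y)⁻¹))) := by
    have hm := (mke 1).mul (mke 1) |>.mul (mke 1) |>.mul (mke 1) |>.mul mwinv
      |>.mul mwinv |>.mul (mke (x*y)) |>.mul (mke ((x*y)⁻¹)) |>.mul minv_o1 |>.mul minv_o2
    refine (multipliable_congr fun n => ?_).mp hm
    simp only [div_eq_mul_inv, mul_inv, ← inv_pow]
    ring
  have hB : Multipliable (fun a : ℕ => (Zxy x y ((x * y)⁻¹ * w ^ (2 * (a + 1)))) ^ 2) := by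
    have hm := (mke y⁻¹).mul (mke y⁻¹) |>.mul (mke x⁻¹) |>.mul (mke x⁻¹)
      |>.mul (mke x) |>.mul (mke x) |>.mul (mke y) |>.mul (mke y) |>.mul minv_e2
      |>.mul minv_e2 |>.mul mwinv2 |>.mul mwinv2 |>.mul mwinv2 |>.mul mwinv2
      |>.mul minv_e1 |>.mul minv_e1
    refine (multipliable_congr fun n => ?_).mp hm
    simp only [Zxy]
    rw [div_pow]
    have e1 : x * ((x*y)⁻¹ * w ^ (2*(n+1))) = y⁻¹ * w ^ (2*(n+1)) := by
      field_simp
      all_goals ring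
    have e2 : y * ((x*y)⁻¹ * w ^ (2*(n+1))) = x⁻¹ * w ^ (2*(n+1)) := by
      field_simp
      all_goals ring
    have e3 : x^2*y * ((x*y)⁻¹ * w ^ (2*(n+1))) = x * w ^ (2*(n+1)) := by
      field_simp
      all_goals ring
    have e4 : x*y^2 * ((x*y)⁻¹ * w ^ (2*(n+1))) = y * w ^ (2*(n+1)) := by
      field_simp
      all_goals ring
    have e5 : x*y * ((x*y)⁻¹ * w ^ (2*(n+1))) = w ^ (2*(n+1)) := by
      field_simp
      all_goals ring
    have e6 : x^2*y^2 * ((x*y)⁻¹ * w ^ (2*(n+1))) = x*y * w ^ (2*(n+1)) := by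
      field_simp
      all_goals ring
    rw [e1, e2, e3, e4, e5, e6]
    simp only [div_eq_mul_inv, mul_inv, ← inv_pow]
    ring
  have hR : Multipliable (fun n : ℕ =>
      ((1 - x⁻¹ * w ^ (2 * (n + 1))) ^ 2 * (1 - y⁻¹ * w ^ (2 * (n + 1))) ^ 2 *
          (1 - x * w ^ (2 * (n + 1))) ^ 2 * (1 - y * w ^ (2 * (n + 1))) ^ 2) /
        ((1 - (x * y)⁻¹ * w ^ (n + 1)) * (1 - w ^ (n + 1)) ^ 2 *
          (1 - x * y * w ^ (n + 1)))) := by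
    have hm := (mke x⁻¹).mul (mke x⁻¹) |>.mul (mke y⁻¹) |>.mul (mke y⁻¹)
      |>.mul (mke x) |>.mul (mke x) |>.mul (mke y) |>.mul (mke y) |>.mul minv_a2
      |>.mul mwinv |>.mul mwinv |>.mul minv_a1
    refine (multipliable_congr fun n => ?_).mp hm
    simp only [div_eq_mul_inv, mul_inv, ← inv_pow]
    ring
  refine ⟨hA, hB, ?_, ?_⟩
  · exact hR
  -- the product identity
  have hC : Multipliable (fun n : ℕ =>
      ((1 - x⁻¹ * w ^ (2*(n+1))) ^ 2 * (1 - y⁻¹ * w ^ (2*(n+1))) ^ 2 *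
        (1 - x * w ^ (2*(n+1))) ^ 2 * (1 - y * w ^ (2*(n+1))) ^ 2) *
        (((1:ℂ) - w ^ (n+1))⁻¹) ^ 2) := by
    have hm := (mke x⁻¹).mul (mke x⁻¹) |>.mul (mke y⁻¹) |>.mul (mke y⁻¹)
      |>.mul (mke x) |>.mul (mke x) |>.mul (mke y) |>.mul (mke y) |>.mul mwinv |>.mul mwinv
    refine (multipliable_congr fun n => ?_).mp hm
    ring
  have hGe : Multipliable (fun k : ℕ =>
      (((1:ℂ) - x*y*w^(2*k+1)) * (1 - (x*y)⁻¹*w^(2*k+1)))⁻¹) := by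
    refine (multipliable_congr fun k => ?_).mp (minv_o1.mul minv_o2)
    exact (mul_inv _ _).symm
  have hGo : Multipliable (fun k : ℕ =>
      (((1:ℂ) - x*y*w^(2*k+1+1)) * (1 - (x*y)⁻¹*w^(2*k+1+1)))⁻¹) := by
    refine (multipliable_congr fun k => ?_).mp (minv_oo1.mul minv_oo2)
    exact (mul_inv _ _).symm
  have hG : Multipliable (fun m : ℕ =>
      (((1:ℂ) - x*y*w^(m+1)) * (1 - (x*y)⁻¹*w^(m+1)))⁻¹) := by
    refine (multipliable_congr fun m => ?_).mp (minv_a1.mul minv_a2)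
    exact (mul_inv _ _).symm
  -- pointwise identity 1 : A n * B n = C n * (G (2n) * G (2n+1))
  have key1 : ∀ n : ℕ,
      (((1 - w ^ (2 * (n + 1))) ^ 4 / (1 - w ^ (n + 1)) ^ 2) *
        ((1 - w ^ (2 * (n + 1)) * (x * y)) * (1 - w ^ (2 * (n + 1)) * (x * y)⁻¹)) /
        ((1 - w ^ (2 * n + 1) * (x * y)) * (1 - w ^ (2 * n + 1) * (x * y)⁻¹))) *
      ((Zxy x y ((x * y)⁻¹ * w ^ (2 * (n + 1)))) ^ 2) =
      (((1 - x⁻¹ * w ^ (2*(n+1))) ^ 2 * (1 - y⁻¹ * w ^ (2*(n+1))) ^ 2 *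
        (1 - x * w ^ (2*(n+1))) ^ 2 * (1 - y * w ^ (2*(n+1))) ^ 2) *
        (((1:ℂ) - w ^ (n+1))⁻¹) ^ 2) *
      (((((1:ℂ) - x*y*w^(2*n+1)) * (1 - (x*y)⁻¹*w^(2*n+1)))⁻¹) *
        ((((1:ℂ) - x*y*w^(2*n+1+1)) * (1 - (x*y)⁻¹*w^(2*n+1+1)))⁻¹)) := by
    intro n
    rw [show (2*n+1+1) = 2*(n+1) from by omega]
    have e1 : x * ((x*y)⁻¹ * w ^ (2*(n+1))) = y⁻¹ * w ^ (2*(n+1)) := by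
      field_simp
      all_goals ring
    have e2 : y * ((x*y)⁻¹ * w ^ (2*(n+1))) = x⁻¹ * w ^ (2*(n+1)) := by
      field_simp
      all_goals ring
    have e3 : x^2*y * ((x*y)⁻¹ * w ^ (2*(n+1))) = x * w ^ (2*(n+1)) := by
      field_simp
      all_goals ring
    have e4 : x*y^2 * ((x*y)⁻¹ * w ^ (2*(n+1))) = y * w ^ (2*(n+1)) := by
      field_simp
      all_goals ring
    have e5 : x*y * ((x*y)⁻¹ * w ^ (2*(n+1))) = w ^ (2*(n+1)) := by
      field_simp
      all_goals ring
    have e6 : x^2*y^2 * ((x*y)⁻¹ * w ^ (2*(n+1))) = x*y * w ^ (2*(n+1)) := by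
      field_simp
      all_goals ring
    simp only [Zxy]
    rw [e1, e2, e3, e4, e5, e6, div_pow]
    rw [show 1 - w^(2*(n+1))*(x*y) = 1 - x*y*w^(2*(n+1)) from by ring,
        show 1 - w^(2*(n+1))*(x*y)⁻¹ = 1 - (x*y)⁻¹*w^(2*(n+1)) from by ring,
        show 1 - w^(2*n+1)*(x*y) = 1 - x*y*w^(2*n+1) from by ring,
        show 1 - w^(2*n+1)*(x*y)⁻¹ = 1 - (x*y)⁻¹*w^(2*n+1) from by ring]
    exact frac_abstract (1 - w^(n+1)) (1 - w^(2*(n+1))) (1 - x*y*w^(2*n+1))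
      (1 - (x*y)⁻¹*w^(2*n+1)) (1 - x*y*w^(2*(n+1))) (1 - (x*y)⁻¹*w^(2*(n+1)))
      (1 - x⁻¹*w^(2*(n+1))) (1 - y⁻¹*w^(2*(n+1))) (1 - x*w^(2*(n+1))) (1 - y*w^(2*(n+1)))
      (hwne n) (hwne2 n) (hd1 n) (hd2 n) (h4 n) (h3 n)
  -- pointwise identity 2 : C n * G n = R n
  have key2 : ∀ n : ℕ,
      ((((1 - x⁻¹ * w ^ (2*(n+1))) ^ 2 * (1 - y⁻¹ * w ^ (2*(n+1))) ^ 2 *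
        (1 - x * w ^ (2*(n+1))) ^ 2 * (1 - y * w ^ (2*(n+1))) ^ 2) *
        (((1:ℂ) - w ^ (n+1))⁻¹) ^ 2) *
        ((((1:ℂ) - x*y*w^(n+1)) * (1 - (x*y)⁻¹*w^(n+1)))⁻¹)) =
      ((1 - x⁻¹ * w ^ (2 * (n + 1))) ^ 2 * (1 - y⁻¹ * w ^ (2 * (n + 1))) ^ 2 *
          (1 - x * w ^ (2 * (n + 1))) ^ 2 * (1 - y * w ^ (2 * (n + 1))) ^ 2) /
        ((1 - (x * y)⁻¹ * w ^ (n + 1)) * (1 - w ^ (n + 1)) ^ 2 *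
          (1 - x * y * w ^ (n + 1))) := by
    intro n
    simp only [div_eq_mul_inv, mul_inv, ← inv_pow]
    ring
  calc (∏' n : ℕ,
        ((1 - w ^ (2 * (n + 1))) ^ 4 / (1 - w ^ (n + 1)) ^ 2) *
          ((1 - w ^ (2 * (n + 1)) * (x * y)) * (1 - w ^ (2 * (n + 1)) * (x * y)⁻¹)) /
          ((1 - w ^ (2 * n + 1) * (x * y)) * (1 - w ^ (2 * n + 1) * (x * y)⁻¹))) *
      (∏' a : ℕ, (Zxy x y ((x * y)⁻¹ * w ^ (2 * (a + 1)))) ^ 2)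
      = ∏' n : ℕ, ((((1 - w ^ (2 * (n + 1))) ^ 4 / (1 - w ^ (n + 1)) ^ 2) *
          ((1 - w ^ (2 * (n + 1)) * (x * y)) * (1 - w ^ (2 * (n + 1)) * (x * y)⁻¹)) /
          ((1 - w ^ (2 * n + 1) * (x * y)) * (1 - w ^ (2 * n + 1) * (x * y)⁻¹))) *
          ((Zxy x y ((x * y)⁻¹ * w ^ (2 * (n + 1)))) ^ 2)) := (Multipliable.tprod_mul hA hB).symm
    _ = ∏' n : ℕ, ((((1 - x⁻¹ * w ^ (2*(n+1))) ^ 2 * (1 - y⁻¹ * w ^ (2*(n+1))) ^ 2 *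
          (1 - x * w ^ (2*(n+1))) ^ 2 * (1 - y * w ^ (2*(n+1))) ^ 2) *
          (((1:ℂ) - w ^ (n+1))⁻¹) ^ 2) *
          (((((1:ℂ) - x*y*w^(2*n+1)) * (1 - (x*y)⁻¹*w^(2*n+1)))⁻¹) *
            ((((1:ℂ) - x*y*w^(2*n+1+1)) * (1 - (x*y)⁻¹*w^(2*n+1+1)))⁻¹))) :=
        tprod_congr key1
    _ = (∏' n : ℕ, (((1 - x⁻¹ * w ^ (2*(n+1))) ^ 2 * (1 - y⁻¹ * w ^ (2*(n+1))) ^ 2 *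
          (1 - x * w ^ (2*(n+1))) ^ 2 * (1 - y * w ^ (2*(n+1))) ^ 2) *
          (((1:ℂ) - w ^ (n+1))⁻¹) ^ 2)) *
        (∏' n : ℕ, (((((1:ℂ) - x*y*w^(2*n+1)) * (1 - (x*y)⁻¹*w^(2*n+1)))⁻¹) *
            ((((1:ℂ) - x*y*w^(2*n+1+1)) * (1 - (x*y)⁻¹*w^(2*n+1+1)))⁻¹))) :=
        Multipliable.tprod_mul hC (hGe.mul hGo)
    _ = (∏' n : ℕ, (((1 - x⁻¹ * w ^ (2*(n+1))) ^ 2 * (1 - y⁻¹ * w ^ (2*(n+1))) ^ 2 *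
          (1 - x * w ^ (2*(n+1))) ^ 2 * (1 - y * w ^ (2*(n+1))) ^ 2) *
          (((1:ℂ) - w ^ (n+1))⁻¹) ^ 2)) *
        ((∏' n : ℕ, ((((1:ℂ) - x*y*w^(2*n+1)) * (1 - (x*y)⁻¹*w^(2*n+1)))⁻¹)) *
          (∏' n : ℕ, ((((1:ℂ) - x*y*w^(2*n+1+1)) * (1 - (x*y)⁻¹*w^(2*n+1+1)))⁻¹))) := by
        rw [Multipliable.tprod_mul hGe hGo]
    _ = (∏' n : ℕ, (((1 - x⁻¹ * w ^ (2*(n+1))) ^ 2 * (1 - y⁻¹ * w ^ (2*(n+1))) ^ 2 *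
          (1 - x * w ^ (2*(n+1))) ^ 2 * (1 - y * w ^ (2*(n+1))) ^ 2) *
          (((1:ℂ) - w ^ (n+1))⁻¹) ^ 2)) *
        (∏' m : ℕ, (((1:ℂ) - x*y*w^(m+1)) * (1 - (x*y)⁻¹*w^(m+1)))⁻¹) := by
        rw [tprod_even_mul_odd
          (f := fun m : ℕ => (((1:ℂ) - x*y*w^(m+1)) * (1 - (x*y)⁻¹*w^(m+1)))⁻¹)
          hGe hGo]
    _ = ∏' n : ℕ, ((((1 - x⁻¹ * w ^ (2*(n+1))) ^ 2 * (1 - y⁻¹ * w ^ (2*(n+1))) ^ 2 *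
          (1 - x * w ^ (2*(n+1))) ^ 2 * (1 - y * w ^ (2*(n+1))) ^ 2) *
          (((1:ℂ) - w ^ (n+1))⁻¹) ^ 2) *
          ((((1:ℂ) - x*y*w^(n+1)) * (1 - (x*y)⁻¹*w^(n+1)))⁻¹)) := (Multipliable.tprod_mul hC hG).symm
    _ = ∏' n : ℕ,
          ((1 - x⁻¹ * w ^ (2 * (n + 1))) ^ 2 * (1 - y⁻¹ * w ^ (2 * (n + 1))) ^ 2 *
              (1 - x * w ^ (2 * (n + 1))) ^ 2 * (1 - y * w ^ (2 * (n + 1))) ^ 2) /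
            ((1 - (x * y)⁻¹ * w ^ (n + 1)) * (1 - w ^ (n + 1)) ^ 2 *
              (1 - x * y * w ^ (n + 1))) := tprod_congr key2
end
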